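/- arXiv:2010.05303 — 2 statements merged into one kernel-verified Lean document; each statement's English description precedes it below -/
import Mathlib

section
/- Let X, Y, Z be points in H³ such that the segments XY and YZ each have length at least D > 3, and the angle ∠XYZ at Y is at least δ for some δ > π/4. Then the angle ∠YXZ at X (between the segments XY and XZ) satisfies ∠YXZ ≤ 20·e^{-|XY|}. -/
/-- Inverse hyperbolic cosine. -/
noncomputable def arcosh (x : ℝ) : ℝ := Real.log (x + Real.sqrt (x ^ 2 - 1))

/-- Hyperbolic distance between two points of the upper half-space model of `H³`
(points of `ℝ × ℝ × ℝ` with positive third coordinate), given by the standard formula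
`cosh d = 1 + ‖p - q‖² / (2 zₚ z_q)`. -/
noncomputable def hDist (p q : ℝ × ℝ × ℝ) : ℝ :=
  arcosh (1 + ((p.1 - q.1) ^ 2 + (p.2.1 - q.2.1) ^ 2 + (p.2.2 - q.2.2) ^ 2) /
    (2 * p.2.2 * q.2.2))

/-- The hyperbolic angle `∠XYZ` at the vertex `Y`, recovered from the side lengths of the
triangle `XYZ` via the hyperbolic law of cosines. -/
noncomputable def hAngle (X Y Z : ℝ × ℝ × ℝ) : ℝ :=
  Real.arccos ((Real.cosh (hDist Y X) * Real.cosh (hDist Y Z) - Real.cosh (hDist X Z)) /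
    (Real.sinh (hDist Y X) * Real.sinh (hDist Y Z)))

lemma hDist_comm' (p q : ℝ × ℝ × ℝ) : hDist p q = hDist q p := by
  unfold hDist
  congr 2
  ring

lemma hDist_nonneg' (p q : ℝ × ℝ × ℝ) (hp : 0 < p.2.2) (hq : 0 < q.2.2) :
    0 ≤ hDist p q := by
  unfold hDist arcosh
  apply Real.log_nonneg
  have h1 : (0:ℝ) ≤ ((p.1 - q.1) ^ 2 + (p.2.1 - q.2.1) ^ 2 + (p.2.2 - q.2.2) ^ 2) /
      (2 * p.2.2 * q.2.2) := by positivity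
  have h2 := Real.sqrt_nonneg
    ((1 + ((p.1 - q.1) ^ 2 + (p.2.1 - q.2.1) ^ 2 + (p.2.2 - q.2.2) ^ 2) /
      (2 * p.2.2 * q.2.2)) ^ 2 - 1)
  linarith

lemma sinh_ge_half_cosh' {x : ℝ} (hx : 0 ≤ x) (h2 : 2 ≤ Real.cosh x) :
    Real.cosh x / 2 ≤ Real.sinh x := by
  have h := Real.cosh_sq x
  have hs : (0:ℝ) ≤ Real.sinh x := Real.sinh_nonneg_iff.mpr hx
  nlinarith [h, hs, h2]

lemma arccos_le_arccos' {x y : ℝ} (h : x ≤ y) : Real.arccos y ≤ Real.arccos x := by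
  unfold Real.arccos
  have := Real.monotone_arcsin h
  linarith

set_option maxHeartbeats 1000000 in
/-- Let `X, Y, Z ∈ H³` with `|XY|, |YZ| ≥ D > 3` and `∠XYZ ≥ δ` for some
`δ > π/4`.  Then the angle `∠YXZ` at `X` satisfies `∠YXZ ≤ 20 e^{-|XY|}`. -/
theorem angle_estimate_far_vertex
    (D δ : ℝ) (hD : 3 < D) (hδ : Real.pi / 4 < δ)
    (X Y Z : ℝ × ℝ × ℝ) (hX : 0 < X.2.2) (hY : 0 < Y.2.2) (hZ : 0 < Z.2.2)
    (hXY : D ≤ hDist X Y) (hYZ : D ≤ hDist Y Z)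
    (hangle : δ ≤ hAngle X Y Z) :
    hAngle Y X Z ≤ 20 * Real.exp (-(hDist X Y)) := by
  unfold hAngle at hangle ⊢
  rw [hDist_comm' Y X] at hangle
  have hb0 : 0 ≤ hDist X Z := hDist_nonneg' X Z hX hZ
  set c := hDist X Y with hcdef
  set a := hDist Y Z with hadef
  set b := hDist X Z with hbdef
  clear_value a b c
  have hc3 : (3:ℝ) < c := lt_of_lt_of_le hD hXY
  have ha3 : (3:ℝ) < a := lt_of_lt_of_le hD hYZ
  -- exponential bound
  have hE : (20:ℝ) ≤ Real.exp c := by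
    have h3 : Real.exp 3 ≤ Real.exp c := Real.exp_le_exp.mpr hc3.le
    have hd9 := Real.exp_one_gt_d9
    have hcube : ((2.7182818283:ℝ)) ^ (3:ℕ) ≤ Real.exp 1 ^ (3:ℕ) := by
      gcongr
    have he3 : Real.exp 3 = Real.exp 1 ^ (3:ℕ) := by
      rw [← Real.exp_nat_mul]; norm_num
    rw [he3] at h3
    nlinarith [hcube, h3]
  have hEpos : (0:ℝ) < Real.exp c := Real.exp_pos c
  -- hyperbolic function facts
  have hCc : (10:ℝ) ≤ Real.cosh c := by
    rw [Real.cosh_eq]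
    have := (Real.exp_pos (-c)).le
    linarith
  have hCcE : Real.exp c / 2 ≤ Real.cosh c := by
    rw [Real.cosh_eq]
    have := (Real.exp_pos (-c)).le
    linarith
  have hSc : (49:ℝ)/100 * Real.exp c ≤ Real.sinh c := by
    rw [Real.sinh_eq]
    have h1 : Real.exp (-c) ≤ 1 / 20 := by
      rw [Real.exp_neg, inv_le_comm₀ hEpos (by norm_num)]
      linarith
    linarith
  have hScpos : (0:ℝ) < Real.sinh c := by linarith
  have hSlCc : Real.sinh c < Real.cosh c := Real.sinh_lt_cosh c
  have hSlCa : Real.sinh a < Real.cosh a := Real.sinh_lt_cosh a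
  have hSapos : (0:ℝ) < Real.sinh a := Real.sinh_pos_iff.mpr (by linarith)
  have hCa1 : (1:ℝ) ≤ Real.cosh a := Real.one_le_cosh a
  have hScCc : Real.exp c ^ 2 / 5 ≤ Real.sinh c * Real.cosh c := by
    have hm := mul_le_mul hSc hCcE (by positivity) (by linarith)
    nlinarith [hm, sq_nonneg (Real.exp c)]
  -- from the angle hypothesis, an upper bound on the cosine at Y
  have hP : (Real.cosh c * Real.cosh a - Real.cosh b) / (Real.sinh c * Real.sinh a)
      ≤ Real.sqrt 2 / 2 := by
    by_contra h
    push_neg at h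
    have h1 := arccos_le_arccos' h.le
    rw [show Real.sqrt 2 / 2 = Real.cos (Real.pi / 4) from (Real.cos_pi_div_four).symm,
      Real.arccos_cos (by positivity) (by linarith [Real.pi_pos])] at h1
    linarith
  have hs2 : Real.sqrt 2 ≤ 3/2 := by
    rw [show (3:ℝ)/2 = Real.sqrt ((3/2)^2) from (Real.sqrt_sq (by norm_num)).symm]
    exact Real.sqrt_le_sqrt (by norm_num)
  have hSSpos : (0:ℝ) < Real.sinh c * Real.sinh a := mul_pos hScpos hSapos
  have hP' : Real.cosh c * Real.cosh a - Real.cosh b ≤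
      3/4 * (Real.sinh c * Real.sinh a) := by
    rw [div_le_iff₀ hSSpos] at hP
    have hmul := mul_le_mul_of_nonneg_right hs2 hSSpos.le
    linarith [hP, hmul]
  -- lower bound on cosh b
  have hmca : Real.sinh c * Real.sinh a ≤ Real.cosh c * Real.cosh a :=
    mul_le_mul hSlCc.le hSlCa.le hSapos.le (Real.cosh_pos c).le
  have hCb : 1/4 * (Real.cosh a * Real.cosh c) ≤ Real.cosh b := by linarith
  have hCbpos : (0:ℝ) < Real.cosh b := Real.cosh_pos b
  have hCb2 : (5:ℝ)/2 ≤ Real.cosh b := by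
    have h10 : (1:ℝ) * 10 ≤ Real.cosh a * Real.cosh c :=
      mul_le_mul hCa1 hCc (by norm_num) (by linarith)
    linarith
  have hSb0 : (0:ℝ) ≤ Real.sinh b := Real.sinh_nonneg_iff.mpr hb0
  have hSb : Real.cosh b / 2 ≤ Real.sinh b :=
    sinh_ge_half_cosh' hb0 (by linarith)
  have hSbpos : (0:ℝ) < Real.sinh b := by linarith
  have hSlCb : Real.sinh b < Real.cosh b := Real.sinh_lt_cosh b
  have hSpos : (0:ℝ) < Real.sinh c * Real.sinh b := mul_pos hScpos hSbpos
  set Q := (Real.cosh c * Real.cosh b - Real.cosh a) / (Real.sinh c * Real.sinh b)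
    with hQdef
  clear_value Q
  -- Q is nonnegative
  have hNpos : (0:ℝ) ≤ Real.cosh c * Real.cosh b - Real.cosh a := by
    have h1 := mul_le_mul_of_nonneg_left hCb (Real.cosh_pos c).le
    have h2 : (10:ℝ) * 10 ≤ Real.cosh c * Real.cosh c :=
      mul_le_mul hCc hCc (by norm_num) (by linarith)
    have h3 := mul_le_mul_of_nonneg_right h2 (by linarith : (0:ℝ) ≤ Real.cosh a)
    linarith [h1, h3, hCa1]
  have hQ0 : 0 ≤ Q := by rw [hQdef]; exact div_nonneg hNpos hSpos.le
  -- key estimate : 1 - Q ≤ 40 / E²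
  have key1 : 1 - Q ≤ 40 / Real.exp c ^ 2 := by
    have hmcb : Real.sinh c * Real.sinh b ≤ Real.cosh c * Real.cosh b :=
      mul_le_mul hSlCc.le hSlCb.le hSb0 (Real.cosh_pos c).le
    have hSN : Real.sinh c * Real.sinh b - (Real.cosh c * Real.cosh b - Real.cosh a)
        ≤ Real.cosh a := by linarith
    have e1 : 1 - Q = (Real.sinh c * Real.sinh b -
        (Real.cosh c * Real.cosh b - Real.cosh a)) / (Real.sinh c * Real.sinh b) := by
      rw [hQdef]; field_simp
    rw [e1]
    have e2 : (Real.sinh c * Real.sinh b - (Real.cosh c * Real.cosh b - Real.cosh a)) /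
        (Real.sinh c * Real.sinh b) ≤ Real.cosh a / (Real.sinh c * Real.sinh b) := by
      gcongr
    refine e2.trans ?_
    rw [div_le_div_iff₀ hSpos (by positivity)]
    have hSb8 : Real.cosh a * Real.cosh c / 8 ≤ Real.sinh b := by linarith
    have hA := mul_le_mul_of_nonneg_left hScCc (Real.cosh_pos a).le
    have hB := mul_le_mul_of_nonneg_left hSb8 hScpos.le
    linarith [hA, hB]
  rcases le_or_gt 1 Q with h1 | h1
  · rw [Real.arccos_of_one_le h1]
    positivity
  · -- Jordan's inequality
    have hα : Real.arccos Q ≤ Real.pi / 2 := Real.arccos_le_pi_div_two.mpr hQ0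
    have hj := Real.mul_le_sin (Real.arccos_nonneg Q) hα
    rw [Real.sin_arccos] at hj
    have h80 : 1 - Q ^ 2 ≤ 81 / Real.exp c ^ 2 := by
      have key1' : (1 - Q) * Real.exp c ^ 2 ≤ 40 :=
        (le_div_iff₀ (by positivity)).mp key1
      rw [le_div_iff₀ (by positivity : (0:ℝ) < Real.exp c ^ 2)]
      have h2 := mul_le_mul_of_nonneg_right key1' (by linarith : (0:ℝ) ≤ 1 + Q)
      nlinarith [h2]
    have hsq : Real.sqrt (1 - Q ^ 2) ≤ 9 / Real.exp c := by
      rw [show (9:ℝ) / Real.exp c = Real.sqrt ((9 / Real.exp c) ^ 2) from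
        (Real.sqrt_sq (by positivity)).symm]
      apply Real.sqrt_le_sqrt
      have e9 : (9 / Real.exp c) ^ 2 = 81 / Real.exp c ^ 2 := by
        rw [div_pow]; norm_num
      rw [e9]
      exact h80
    have hpi := Real.pi_le_four
    have hpipos := Real.pi_pos
    have hfin : Real.arccos Q ≤ Real.pi / 2 * (9 / Real.exp c) := by
      have h2 := mul_le_mul_of_nonneg_left (hj.trans hsq)
        (by positivity : (0:ℝ) ≤ Real.pi / 2)
      calc Real.arccos Q = Real.pi / 2 * (2 / Real.pi * Real.arccos Q) := by
            field_simp
            all_goals ring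
        _ ≤ _ := h2
    rw [Real.exp_neg]
    have hlast : Real.pi / 2 * (9 / Real.exp c) ≤ 20 * (Real.exp c)⁻¹ := by
      rw [inv_eq_one_div]
      calc Real.pi / 2 * (9 / Real.exp c) = Real.pi / 2 * 9 * (1 / Real.exp c) := by
            ring
        _ ≤ 20 * (1 / Real.exp c) := by
            have : Real.pi / 2 * 9 ≤ 20 := by linarith
            gcongr
    linarith
end

section
/- Let γ be an isometry of H³ that translates a geodesic line l by distance L₁ > 0 along itself (with no rotation needed for this estimate). Let z ∈ H³ be a point with d(z, γz) = L₂, where 0 ≤ L₂ - L₁ ≤ 1/400 and L₁ ≥ 10 ln 2. If D = d(z, l), then cosh(L₂) ≥ (cosh(L₁) - 1)·cosh²(D) + 1, and consequently D ≤ √(2(e^{L₂ - L₁} - 1)) < 1/10. -/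
set_option maxHeartbeats 1000000

section StatementSevenAux

lemma cosh_arcosh {x : ℝ} (hx : 1 ≤ x) : Real.cosh (arcosh x) = x := by
  have h0 : 0 ≤ x ^ 2 - 1 := by nlinarith
  have hs : Real.sqrt (x ^ 2 - 1) ^ 2 = x ^ 2 - 1 := Real.sq_sqrt h0
  have hsn : 0 ≤ Real.sqrt (x ^ 2 - 1) := Real.sqrt_nonneg _
  have hy : 0 < x + Real.sqrt (x ^ 2 - 1) := by nlinarith
  rw [arcosh, Real.cosh_eq, Real.exp_log hy, Real.exp_neg, Real.exp_log hy]
  have h1 : (x + Real.sqrt (x^2-1))⁻¹ = x - Real.sqrt (x^2-1) := by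
    apply inv_eq_of_mul_eq_one_right; nlinarith
  rw [h1]; ring

lemma arcosh_nonneg {x : ℝ} (hx : 1 ≤ x) : 0 ≤ arcosh x := by
  have hsn : 0 ≤ Real.sqrt (x ^ 2 - 1) := Real.sqrt_nonneg _
  have : (1:ℝ) ≤ x + Real.sqrt (x ^ 2 - 1) := by linarith
  exact Real.log_nonneg this

lemma arcosh_cosh {x : ℝ} (hx : 0 ≤ x) : arcosh (Real.cosh x) = x := by
  have h : Real.cosh x ^ 2 - 1 = Real.sinh x ^ 2 := by
    have := Real.cosh_sq_sub_sinh_sq x; nlinarith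
  have hsh : 0 ≤ Real.sinh x := Real.sinh_nonneg_iff.mpr hx
  rw [arcosh, h, Real.sqrt_sq hsh, Real.cosh_eq, Real.sinh_eq]
  have h2 : (Real.exp x + Real.exp (-x))/2 + (Real.exp x - Real.exp (-x))/2 = Real.exp x := by
    ring
  rw [h2, Real.log_exp]

lemma arcosh_le_arcosh {x y : ℝ} (hx : 1 ≤ x) (hxy : x ≤ y) : arcosh x ≤ arcosh y := by
  apply Real.log_le_log (by nlinarith [Real.sqrt_nonneg (x^2-1)])
  have : Real.sqrt (x^2-1) ≤ Real.sqrt (y^2-1) := by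
    apply Real.sqrt_le_sqrt; nlinarith
  linarith


/-- Minkowski bilinear form on ℝ⁴. -/
def mB (p q : ℝ × ℝ × ℝ × ℝ) : ℝ :=
  p.1*q.1 - p.2.1*q.2.1 - p.2.2.1*q.2.2.1 - p.2.2.2*q.2.2.2

/-- Hyperboloid lift of an upper-half-space point. -/
noncomputable def hlift (p : ℝ × ℝ × ℝ) : ℝ × ℝ × ℝ × ℝ :=
  ((p.1^2 + p.2.1^2 + p.2.2^2 + 1)/(2*p.2.2), p.1/p.2.2, p.2.1/p.2.2,
   (p.1^2 + p.2.1^2 + p.2.2^2 - 1)/(2*p.2.2))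

noncomputable def cdist (p q : ℝ × ℝ × ℝ) : ℝ :=
  1 + ((p.1 - q.1) ^ 2 + (p.2.1 - q.2.1) ^ 2 + (p.2.2 - q.2.2) ^ 2) /
    (2 * p.2.2 * q.2.2)

lemma mB_symm (p q : ℝ × ℝ × ℝ × ℝ) : mB p q = mB q p := by simp [mB]; ring

lemma mB_hlift {p q : ℝ × ℝ × ℝ} (hp : 0 < p.2.2) (hq : 0 < q.2.2) :
    mB (hlift p) (hlift q) = cdist p q := by
  simp only [mB, hlift, cdist]
  field_simp
  ring

lemma one_le_cdist {p q : ℝ × ℝ × ℝ} (hp : 0 < p.2.2) (hq : 0 < q.2.2) :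
    1 ≤ cdist p q := by
  have : 0 ≤ ((p.1 - q.1) ^ 2 + (p.2.1 - q.2.1) ^ 2 + (p.2.2 - q.2.2) ^ 2) /
      (2 * p.2.2 * q.2.2) := by positivity
  simp [cdist]; linarith

lemma cdist_self {p : ℝ × ℝ × ℝ} (hp : 0 < p.2.2) : cdist p p = 1 := by
  simp [cdist]

section algebra
variable (x y : ℝ) (p q r w : ℝ × ℝ × ℝ × ℝ)

lemma mB_add_left : mB (p + q) r = mB p r + mB q r := by
  simp [mB, Prod.fst_add, Prod.snd_add]; ring

lemma mB_sub_left : mB (p - q) r = mB p r - mB q r := by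
  simp [mB, Prod.fst_sub, Prod.snd_sub]; ring

lemma mB_smul_left : mB (x • p) r = x * mB p r := by
  simp [mB, Prod.smul_fst, Prod.smul_snd, smul_eq_mul]; ring

lemma mB_add_right : mB r (p + q) = mB r p + mB r q := by
  simp [mB, Prod.fst_add, Prod.snd_add]; ring

lemma mB_sub_right : mB r (p - q) = mB r p - mB r q := by
  simp [mB, Prod.fst_sub, Prod.snd_sub]; ring

lemma mB_smul_right : mB r (x • p) = x * mB r p := by
  simp [mB, Prod.smul_fst, Prod.smul_snd, smul_eq_mul]; ring

lemma mB_zero_right : mB r 0 = 0 := by simp [mB]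

end algebra

/-- A null vector orthogonal to a unit timelike vector vanishes. -/
lemma null_eq_zero {A G : ℝ × ℝ × ℝ × ℝ} (hA : mB A A = 1) (h1 : mB G A = 0)
    (h2 : 0 ≤ mB G G) : G = 0 := by
  obtain ⟨a0, a1, a2, a3⟩ := A
  obtain ⟨g0, g1, g2, g3⟩ := G
  simp only [mB] at hA h1 h2
  have hcs : (g1*a1 + g2*a2 + g3*a3)^2 ≤ (g1^2+g2^2+g3^2)*(a1^2+a2^2+a3^2) := by
    nlinarith [sq_nonneg (g1*a2 - g2*a1), sq_nonneg (g1*a3 - g3*a1), sq_nonneg (g2*a3 - g3*a2)]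
  have hA2 : a1^2+a2^2+a3^2 = a0^2 - 1 := by linear_combination -hA
  have hgsq : g1^2+g2^2+g3^2 ≤ g0^2 := by nlinarith
  have heq : g0 * a0 = g1*a1 + g2*a2 + g3*a3 := by linarith
  have key : g0^2 * a0^2 ≤ g0^2 * (a0^2 - 1) := by
    calc g0^2*a0^2 = (g0*a0)^2 := by ring
    _ = (g1*a1+g2*a2+g3*a3)^2 := by rw [heq]
    _ ≤ (g1^2+g2^2+g3^2)*(a1^2+a2^2+a3^2) := hcs
    _ = (g1^2+g2^2+g3^2)*(a0^2-1) := by rw [hA2]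
    _ ≤ g0^2*(a0^2-1) := mul_le_mul_of_nonneg_right hgsq (by nlinarith)
  have hg0sq : g0^2 = 0 := le_antisymm (by nlinarith [sq_nonneg g0]) (sq_nonneg g0)
  have hg0 : g0 = 0 := sq_eq_zero_iff.mp hg0sq
  have hg : g1^2 + g2^2 + g3^2 ≤ 0 := by nlinarith
  have h1' : g1 = 0 := by
    have e1 : g1^2 = 0 := le_antisymm (by nlinarith [sq_nonneg g2, sq_nonneg g3]) (sq_nonneg g1)
    exact sq_eq_zero_iff.mp e1
  have h2' : g2 = 0 := by
    have e1 : g2^2 = 0 := le_antisymm (by nlinarith [sq_nonneg g1, sq_nonneg g3]) (sq_nonneg g2)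
    exact sq_eq_zero_iff.mp e1
  have h3' : g3 = 0 := by
    have e1 : g3^2 = 0 := le_antisymm (by nlinarith [sq_nonneg g1, sq_nonneg g2]) (sq_nonneg g3)
    exact sq_eq_zero_iff.mp e1
  simp [hg0, h1', h2', h3', Prod.ext_iff]

/-- Vectors orthogonal to a unit timelike vector are non-timelike. -/
lemma orth_nonpos {A G : ℝ × ℝ × ℝ × ℝ} (hA : mB A A = 1) (h1 : mB G A = 0) :
    mB G G ≤ 0 := by
  by_contra h
  push_neg at h
  have := null_eq_zero hA h1 (le_of_lt h)
  subst this
  simp [mB] at h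

lemma cosh_hDist {p q : ℝ × ℝ × ℝ} (hp : 0 < p.2.2) (hq : 0 < q.2.2) :
    Real.cosh (hDist p q) = cdist p q :=
  cosh_arcosh (one_le_cdist hp hq)


end StatementSevenAux

/-- Let `γ = φ` be an isometry of `H³` translating a geodesic line
`l = range f` by distance `L₁ > 0` along itself, and let `z` be a point with
`d(z, φ z) = L₂`, where `0 ≤ L₂ - L₁ ≤ 1/400` and `L₁ ≥ 10 ln 2`.  If `D = d(z, l)`, then
`cosh L₂ ≥ (cosh L₁ - 1) cosh² D + 1`, and consequently
`D ≤ √(2 (e^{L₂ - L₁} - 1)) < 1/10`. -/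
theorem dist_to_axis_small
    (L₁ L₂ D : ℝ) (hL₁pos : 0 < L₁) (hL₁ : 10 * Real.log 2 ≤ L₁)
    (h1 : 0 ≤ L₂ - L₁) (h2 : L₂ - L₁ ≤ 1 / 400)
    (φ : ℝ × ℝ × ℝ → ℝ × ℝ × ℝ)
    (hφpos : ∀ p, 0 < p.2.2 → 0 < (φ p).2.2)
    (hφiso : ∀ p q, 0 < p.2.2 → 0 < q.2.2 → hDist (φ p) (φ q) = hDist p q)
    (f : ℝ → ℝ × ℝ × ℝ) (hf : ∀ t, 0 < (f t).2.2)
    (hfiso : ∀ s t, hDist (f s) (f t) = |s - t|)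
    (htrans : ∀ t, φ (f t) = f (t + L₁))
    (z : ℝ × ℝ × ℝ) (hz : 0 < z.2.2)
    (hL₂ : hDist z (φ z) = L₂)
    (hD : D = sInf (hDist z '' Set.range f)) :
    (Real.cosh L₁ - 1) * Real.cosh D ^ 2 + 1 ≤ Real.cosh L₂ ∧
    D ≤ Real.sqrt (2 * (Real.exp (L₂ - L₁) - 1)) ∧
    Real.sqrt (2 * (Real.exp (L₂ - L₁) - 1)) < 1 / 10 := by
  have hφz : 0 < (φ z).2.2 := hφpos z hz
  set F : ℝ → ℝ × ℝ × ℝ × ℝ := fun t => hlift (f t) with hFdef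
  set Z : ℝ × ℝ × ℝ × ℝ := hlift z with hZdef
  set W : ℝ × ℝ × ℝ × ℝ := hlift (φ z) with hWdef
  -- Basic product values on the geodesic
  have hFF : ∀ s t, mB (F s) (F t) = Real.cosh (s - t) := by
    intro s t
    rw [hFdef]
    rw [mB_hlift (hf s) (hf t), ← cosh_hDist (hf s) (hf t), hfiso s t, Real.cosh_abs]
  set A : ℝ × ℝ × ℝ × ℝ := F 0 with hAdef
  set Vv : ℝ × ℝ × ℝ × ℝ := (Real.sinh 1)⁻¹ • (F 1 - Real.cosh 1 • A) with hVdef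
  have hs1 : Real.sinh 1 ≠ 0 := ne_of_gt (by positivity)
  have hAA : mB A A = 1 := by rw [hAdef, hFF 0 0]; norm_num
  have hFA : ∀ t, mB (F t) A = Real.cosh t := by
    intro t; rw [hAdef, hFF t 0, sub_zero]
  have hAF : ∀ t, mB A (F t) = Real.cosh t := by
    intro t; rw [mB_symm]; exact hFA t
  have hFV : ∀ t, mB (F t) Vv = -Real.sinh t := by
    intro t
    rw [hVdef, mB_smul_right, mB_sub_right, mB_smul_right, hFF t 1, hFA t, Real.cosh_sub]
    field_simp
    ring
  have hVF : ∀ t, mB Vv (F t) = -Real.sinh t := by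
    intro t; rw [mB_symm]; exact hFV t
  have hAV : mB A Vv = 0 := by
    rw [hAdef, hFV 0, Real.sinh_zero, neg_zero]
  have hVA : mB Vv A = 0 := by rw [mB_symm, hAV]
  have hVV : mB Vv Vv = -1 := by
    rw [hVdef, mB_smul_left, mB_sub_left, mB_smul_left, ← hVdef, hFV 1, hAV]
    field_simp
    ring
  -- decomposition of the geodesic
  have hFdec : ∀ t, F t = Real.cosh t • A + Real.sinh t • Vv := by
    intro t
    have hGA : mB (F t - Real.cosh t • A - Real.sinh t • Vv) A = 0 := by
      rw [mB_sub_left, mB_sub_left, mB_smul_left, mB_smul_left, hFA t, hAA, hVA]; ring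
    have hGG : mB (F t - Real.cosh t • A - Real.sinh t • Vv)
        (F t - Real.cosh t • A - Real.sinh t • Vv) = 0 := by
      simp only [mB_sub_left, mB_sub_right, mB_smul_left, mB_smul_right, hFF, hFA, hAF,
        hFV, hVF, hAA, hAV, hVA, hVV, sub_self, zero_sub, sub_zero, Real.cosh_neg,
        Real.sinh_neg, Real.cosh_zero, Real.sinh_zero]
      linear_combination -Real.cosh_sq_sub_sinh_sq t
    have h0 := null_eq_zero hAA hGA (le_of_eq hGG.symm)
    have h0' : F t - (Real.cosh t • A + Real.sinh t • Vv) = 0 := by rw [← h0]; abel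
    exact sub_eq_zero.mp h0'
  -- coefficients for z
  set a : ℝ := mB Z A with hadef
  set b : ℝ := mB Z Vv with hbdef
  have hZA : mB Z A = a := rfl
  have hZV : mB Z Vv = b := rfl
  have hZF : ∀ t, mB Z (F t) = a * Real.cosh t + b * Real.sinh t := by
    intro t
    rw [hFdec t, mB_add_right, mB_smul_right, mB_smul_right, hZA, hZV]; ring
  have hZFc : ∀ t, cdist z (f t) = a * Real.cosh t + b * Real.sinh t := by
    intro t
    rw [← hZF t, hZdef, hFdef, mB_hlift hz (hf t)]
  have ha1 : 1 ≤ a := by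
    have e := hZFc 0
    rw [Real.cosh_zero, Real.sinh_zero] at e
    have h1c := one_le_cdist hz (hf 0)
    rw [e] at h1c; linarith
  have hZZ : mB Z Z = 1 := by rw [hZdef, mB_hlift hz hz, cdist_self hz]
  -- coefficients for φ z
  have hWF : ∀ s, mB W (F s) = a * Real.cosh (s - L₁) + b * Real.sinh (s - L₁) := by
    intro s
    have hfs : f s = φ (f (s - L₁)) := by rw [htrans (s - L₁), sub_add_cancel]
    have hcd : cdist (φ z) (f s) = cdist z (f (s - L₁)) := by
      rw [← cosh_hDist hφz (hf s), ← cosh_hDist hz (hf (s - L₁))]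
      conv_lhs => rw [hfs]
      rw [hφiso z (f (s - L₁)) hz (hf (s - L₁))]
    rw [hWdef, hFdef, mB_hlift hφz (hf s), hcd, hZFc (s - L₁)]
  set a' : ℝ := a * Real.cosh L₁ - b * Real.sinh L₁ with ha'def
  set b' : ℝ := b * Real.cosh L₁ - a * Real.sinh L₁ with hb'def
  have hWA : mB W A = a' := by
    have e := hWF 0
    rw [← hAdef] at e
    rw [e, zero_sub, Real.cosh_neg, Real.sinh_neg, ha'def]; ring
  have hWV : mB W Vv = b' := by
    have e1 := hWF 1
    rw [hFdec 1, mB_add_right, mB_smul_right, mB_smul_right, hWA,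
      Real.cosh_sub, Real.sinh_sub] at e1
    have e2 : Real.sinh 1 * mB W Vv = Real.sinh 1 * b' := by
      rw [ha'def] at e1; rw [hb'def]; linear_combination e1
    exact mul_left_cancel₀ hs1 e2
  have hWW : mB W W = 1 := by rw [hWdef, mB_hlift hφz hφz, cdist_self hφz]
  -- remainder vectors
  set RZ : ℝ × ℝ × ℝ × ℝ := Z - a • A + b • Vv with hRZdef
  set RW : ℝ × ℝ × ℝ × ℝ := W - a' • A + b' • Vv with hRWdef
  have hRZA : mB RZ A = 0 := by
    rw [hRZdef, mB_add_left, mB_sub_left, mB_smul_left, mB_smul_left, hZA, hAA, hVA]; ring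
  have hRWA : mB RW A = 0 := by
    rw [hRWdef, mB_add_left, mB_sub_left, mB_smul_left, mB_smul_left, hWA, hAA, hVA]; ring
  have hRZZ : mB RZ RZ = 1 - a^2 + b^2 := by
    rw [hRZdef]
    simp only [mB_add_left, mB_add_right, mB_sub_left, mB_sub_right, mB_smul_left, mB_smul_right,
      hZZ, hZA, hZV, hAA, hAV, hVA, hVV, mB_symm A Z, mB_symm Vv Z]
    ring
  have hRWW : mB RW RW = 1 - a'^2 + b'^2 := by
    rw [hRWdef]
    simp only [mB_add_left, mB_add_right, mB_sub_left, mB_sub_right, mB_smul_left, mB_smul_right,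
      hWW, hWA, hWV, hAA, hAV, hVA, hVV, mB_symm A W, mB_symm Vv W]
    ring
  have hZWRR : mB Z W = a * a' - b * b' + mB RZ RW := by
    have e : mB RZ RW = mB Z W - (a*a' - b*b') := by
      rw [hRZdef, hRWdef]
      simp only [mB_add_left, mB_add_right, mB_sub_left, mB_sub_right, mB_smul_left,
        mB_smul_right, hZA, hZV, hAA, hAV, hVA, hVV, mB_symm A W, mB_symm Vv W,
        mB_symm A Z, mB_symm Vv Z, hWA, hWV]
      ring
    rw [e]; ring
  have horth : mB (RZ - RW) (RZ - RW) ≤ 0 := by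
    apply orth_nonpos hAA
    rw [mB_sub_left, hRZA, hRWA]; ring
  have hab : a'^2 - b'^2 = a^2 - b^2 := by
    rw [ha'def, hb'def]
    linear_combination (a^2 - b^2) * Real.cosh_sq_sub_sinh_sq L₁
  have hRZRW : 1 - (a^2 - b^2) ≤ mB RZ RW := by
    rw [mB_sub_left, mB_sub_right, mB_sub_right, hRZZ, hRWW, mB_symm RW RZ] at horth
    linarith
  have hcoshL₂ : Real.cosh L₂ = mB Z W := by
    rw [← hL₂, cosh_hDist hz hφz, hZdef, hWdef, mB_hlift hz hφz]
  have hc2 : 1 ≤ a^2 - b^2 := by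
    have e := orth_nonpos hAA hRZA
    rw [hRZZ] at e; linarith
  -- the master inequality
  have hmaster : (Real.cosh L₁ - 1) * (a^2 - b^2) + 1 ≤ Real.cosh L₂ := by
    rw [hcoshL₂, hZWRR]
    have e : a * a' - b * b' = (a^2 - b^2) * Real.cosh L₁ := by
      rw [ha'def, hb'def]; ring
    rw [e]
    have : (Real.cosh L₁ - 1) * (a ^ 2 - b ^ 2) + 1 =
        (a^2-b^2) * Real.cosh L₁ + (1 - (a^2-b^2)) := by ring
    rw [this]
    linarith
  -- identification of D
  set c : ℝ := Real.sqrt (a^2 - b^2) with hcdef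
  have hcsq : c^2 = a^2 - b^2 := Real.sq_sqrt (by linarith)
  have hc1 : 1 ≤ c := by
    rw [hcdef]
    exact (Real.le_sqrt zero_le_one (by linarith)).mpr (by linarith)
  have hcne : c ≠ 0 := by linarith
  have hlb : ∀ t, c ≤ a * Real.cosh t + b * Real.sinh t := by
    intro t
    have hch := Real.cosh_sq t
    have hchpos := Real.cosh_pos t
    have ha2 : 1 ≤ a^2 := by nlinarith only [ha1, sq_nonneg (a-1)]
    have hprod : (a * Real.cosh t + b * Real.sinh t) * (a * Real.cosh t - b * Real.sinh t)
        = a^2 + (a^2 - b^2) * Real.sinh t ^ 2 := by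
      linear_combination a^2 * hch
    have hprodpos : 1 ≤ (a * Real.cosh t + b * Real.sinh t) * (a * Real.cosh t - b * Real.sinh t) := by
      rw [hprod]
      have := mul_nonneg (show (0:ℝ) ≤ a^2 - b^2 by linarith) (sq_nonneg (Real.sinh t))
      linarith
    have hach : (0:ℝ) < a * Real.cosh t := mul_pos (by linarith) hchpos
    have hupos : 0 < a * Real.cosh t + b * Real.sinh t := by
      by_contra hc'
      push_neg at hc'
      have h2' : 0 ≤ a * Real.cosh t - b * Real.sinh t := by linarith
      have h4 : (a * Real.cosh t + b * Real.sinh t) * (a * Real.cosh t - b * Real.sinh t) ≤ 0 :=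
        mul_nonpos_iff.mpr (Or.inr ⟨hc', h2'⟩)
      linarith
    have husq : c^2 ≤ (a * Real.cosh t + b * Real.sinh t)^2 := by
      have e : (a * Real.cosh t + b * Real.sinh t)^2 - (a^2 - b^2) =
          (a * Real.sinh t + b * Real.cosh t)^2 := by
        linear_combination (a^2 - b^2) * hch
      linarith only [e, sq_nonneg (a * Real.sinh t + b * Real.cosh t), hcsq]
    nlinarith only [husq, hupos, hc1]
  have himage : ∀ t, hDist z (f t) = arcosh (a * Real.cosh t + b * Real.sinh t) := by
    intro t
    rw [show hDist z (f t) = arcosh (cdist z (f t)) from rfl, hZFc t]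
  set t₀ : ℝ := Real.arsinh (-b / c) with ht₀def
  have hs0 : Real.sinh t₀ = -b / c := Real.sinh_arsinh _
  have hc0 : Real.cosh t₀ = a / c := by
    have h1' : Real.cosh t₀ ^ 2 = (a/c)^2 := by
      rw [Real.cosh_sq, hs0]
      field_simp
      linear_combination hcsq
    have h2' : (0:ℝ) < a / c := by positivity
    rw [← Real.sqrt_sq (Real.cosh_pos t₀).le, ← Real.sqrt_sq h2'.le, h1']
  have hval0 : a * Real.cosh t₀ + b * Real.sinh t₀ = c := by
    rw [hc0, hs0]
    field_simp
    linear_combination -hcsq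
  have hleast : IsLeast (hDist z '' Set.range f) (arcosh c) := by
    constructor
    · exact ⟨f t₀, ⟨t₀, rfl⟩, by rw [himage t₀, hval0]⟩
    · rintro x ⟨p, ⟨t, rfl⟩, rfl⟩
      rw [himage t]
      exact arcosh_le_arcosh hc1 (hlb t)
  have hDval : D = arcosh c := by rw [hD, hleast.csInf_eq]
  have hcoshD : Real.cosh D = c := by rw [hDval, cosh_arcosh hc1]
  have hDnn : 0 ≤ D := hDval ▸ arcosh_nonneg hc1
  -- Goal 1
  have goal1 : (Real.cosh L₁ - 1) * Real.cosh D ^ 2 + 1 ≤ Real.cosh L₂ := by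
    rw [hcoshD, hcsq]; exact hmaster
  have hL1ne : L₁ ≠ 0 := ne_of_gt hL₁pos
  have hcosh1 : 1 < Real.cosh L₁ := Real.one_lt_cosh.mpr hL1ne
  set Y : ℝ := Real.exp (L₂ - L₁) with hYdef
  have hY1 : 1 ≤ Y := by
    rw [hYdef, ← Real.exp_zero]
    exact Real.exp_le_exp.mpr h1
  have hYpos : 0 < Y := by linarith
  -- growth estimate: cosh L₂ - 1 ≤ Y² (cosh L₁ - 1)
  have key : Real.cosh L₂ - 1 ≤ Y^2 * (Real.cosh L₁ - 1) := by
    set X : ℝ := Real.exp L₁ with hXdef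
    have hXpos : 0 < X := Real.exp_pos _
    have hX1024 : (1024:ℝ) ≤ X := by
      rw [hXdef]
      have e10 : Real.exp (10 * Real.log 2) = (1024:ℝ) := by
        rw [show (10:ℝ) * Real.log 2 = Real.log (2 ^ (10:ℕ)) by
          rw [Real.log_pow]; push_cast; ring]
        rw [Real.exp_log (by norm_num)]
        norm_num
      calc (1024:ℝ) = Real.exp (10 * Real.log 2) := e10.symm
      _ ≤ Real.exp L₁ := Real.exp_le_exp.mpr hL₁
    have hXY : Real.exp L₂ = X * Y := by
      rw [hXdef, hYdef, ← Real.exp_add]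
      ring_nf
    have hc2' : Real.cosh L₂ = (X*Y + (X*Y)⁻¹)/2 := by
      rw [Real.cosh_eq, hXY, Real.exp_neg, hXY]
    have hc1' : Real.cosh L₁ = (X + X⁻¹)/2 := by
      rw [Real.cosh_eq, Real.exp_neg, hXdef]
    rw [hc2', hc1', ← sub_nonneg]
    have expand : Y^2*((X+X⁻¹)/2 - 1) - ((X*Y + (X*Y)⁻¹)/2 - 1) =
        ((Y-1)*((X-1)^2*Y^2 - (2*X-1)*Y + 1))/(2*X*Y) := by
      field_simp
      ring
    rw [expand]
    apply div_nonneg _ (by positivity)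
    apply mul_nonneg (by linarith)
    have h5 : (2*X - 1) ≤ (X-1)^2 := by nlinarith only [hX1024]
    have h6 : (X-1)^2 ≤ Y*(X-1)^2 := le_mul_of_one_le_left (sq_nonneg _) hY1
    have h7 : 0 ≤ Y*(Y*(X-1)^2 - (2*X-1)) := mul_nonneg (by linarith) (by linarith)
    nlinarith only [h7]
  have hcoshsq : Real.cosh D ^ 2 ≤ Y^2 := by
    have e1 : (Real.cosh L₁ - 1) * Real.cosh D ^2 ≤ (Real.cosh L₁ - 1) * Y^2 := by
      nlinarith only [goal1, key]
    exact le_of_mul_le_mul_left e1 (by linarith)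
  have hhalf : 1 + D^2/2 ≤ Real.cosh D := by
    have e := Real.cosh_two_mul (D/2)
    rw [show 2*(D/2) = D by ring] at e
    have h8 : D/2 ≤ Real.sinh (D/2) := Real.self_le_sinh_iff.mpr (by linarith)
    have h9 : (D/2)^2 ≤ Real.sinh (D/2)^2 := pow_le_pow_left₀ (by linarith) h8 2
    have h10 := Real.cosh_sq (D/2)
    nlinarith only [e, h9, h10]
  have hED : 1 + D^2/2 ≤ Y := by
    have hsq : (1 + D^2/2)^2 ≤ Y^2 :=
      le_trans (pow_le_pow_left₀ (by positivity) hhalf 2) hcoshsq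
    nlinarith only [hsq, hY1, hDnn, sq_nonneg D]
  have hEbound : Y ≤ 400/399 := by
    have h9 := Real.add_one_le_exp (-(L₂ - L₁))
    rw [Real.exp_neg, ← hYdef] at h9
    have h10 : Y * (1 - (L₂ - L₁)) ≤ 1 := by
      calc Y * (1 - (L₂ - L₁)) ≤ Y * Y⁻¹ :=
        mul_le_mul_of_nonneg_left (by linarith) hYpos.le
      _ = 1 := mul_inv_cancel₀ (ne_of_gt hYpos)
      
    have h11 : Y * (L₂ - L₁) ≤ Y * (1/400) :=
      mul_le_mul_of_nonneg_left h2 hYpos.le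
    nlinarith only [h10, h11]
  refine ⟨goal1, ?_, ?_⟩
  · -- Goal 2
    have hD2 : D^2 ≤ 2 * (Y - 1) := by linarith
    exact (Real.le_sqrt hDnn (by linarith)).mpr hD2
  · -- Goal 3
    rw [Real.sqrt_lt' (by norm_num : (0:ℝ) < 1/10)]
    nlinarith only [hEbound]
end
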